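/- Let W, V_1, ..., V_n be a Nica-covariant isometric representation of the odometer semigroup O_n on H. Then the subspace L_0 = ⋂_{i=1}^n ker V_i* reduces W: if h ∈ L_0 then W h ∈ L_0 and W* h ∈ L_0. -/

import Mathlib

open ContinuousLinearMap

/-- For a Nica-covariant isometric representation `{W, V_1, …, V_n}` of `O_n`,
the subspace `L_0 = ⋂_{i} ker V_i*` reduces `W`. -/
theorem stmt_11 {H : Type*} [NormedAddCommGroup H] [InnerProductSpace ℂ H] [CompleteSpace H]
    (n : ℕ) (hn : 0 < n) (W : H →L[ℂ] H) (V : Fin n → H →L[ℂ] H)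
    (hWiso : adjoint W ∘L W = 1)
    (hViso : ∀ i, adjoint (V i) ∘L V i = 1)
    (horth : ∀ i j, i ≠ j → adjoint (V i) ∘L V j = 0)
    (hWV : ∀ i : Fin n, ∀ h : (i : ℕ) + 1 < n, W ∘L V i = V ⟨(i : ℕ) + 1, h⟩)
    (hWVn : W ∘L V ⟨n - 1, by omega⟩ = V ⟨0, hn⟩ ∘L W)
    (hNC : adjoint W ∘L V ⟨0, hn⟩ = V ⟨n - 1, by omega⟩ ∘L adjoint W) :
    ∀ h ∈ ⨅ i : Fin n, LinearMap.ker (adjoint (V i) : H →ₗ[ℂ] H),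
      W h ∈ (⨅ i : Fin n, LinearMap.ker (adjoint (V i) : H →ₗ[ℂ] H)) ∧
      adjoint W h ∈ (⨅ i : Fin n, LinearMap.ker (adjoint (V i) : H →ₗ[ℂ] H)) := by
  intro h hh
  rw [Submodule.mem_iInf] at hh
  have hh' : ∀ i, adjoint (V i) h = 0 := fun i => LinearMap.mem_ker.mp (hh i)
  -- adjoint of hWV : adjoint V_{k+1} = adjoint V_k ∘L adjoint W
  have hadj : ∀ i : Fin n, ∀ hi : (i : ℕ) + 1 < n,
      adjoint (V ⟨(i : ℕ) + 1, hi⟩) = adjoint (V i) ∘L adjoint W := by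
    intro i hi
    rw [← hWV i hi, adjoint_comp]
  -- adjoint of hNC : adjoint (V 0) ∘L W = W ∘L adjoint (V ⟨n-1⟩)
  have hNC' : adjoint (V ⟨0, hn⟩) ∘L W = W ∘L adjoint (V ⟨n - 1, by omega⟩) := by
    have := congrArg adjoint hNC
    simpa only [adjoint_comp, adjoint_adjoint] using this
  -- adjoint of hWVn : adjoint (V ⟨n-1⟩) ∘L adjoint W = adjoint W ∘L adjoint (V 0)
  have hWVn' : adjoint (V ⟨n - 1, by omega⟩) ∘L adjoint W
      = adjoint W ∘L adjoint (V ⟨0, hn⟩) := by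
    have := congrArg adjoint hWVn
    simpa only [adjoint_comp, adjoint_adjoint] using this
  constructor
  · rw [Submodule.mem_iInf]
    intro i
    rw [LinearMap.mem_ker]
    rw [ContinuousLinearMap.coe_coe]
    rcases i with ⟨k, hk⟩
    cases k with
    | zero =>
        have := congrArg (fun T => T h) hNC'
        simp only [comp_apply] at this
        rw [show adjoint (V ⟨0, hn⟩) (W h) = (adjoint (V ⟨0, hn⟩) ∘L W) h from rfl,
          hNC', comp_apply, hh', map_zero]
    | succ m =>
        have key := hadj ⟨m, by omega⟩ hk
        calc adjoint (V ⟨m + 1, hk⟩) (W h)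
            = (adjoint (V ⟨m, by omega⟩) ∘L adjoint W) (W h) := by rw [← key]
          _ = adjoint (V ⟨m, by omega⟩) ((adjoint W ∘L W) h) := by rw [comp_apply, comp_apply]
          _ = 0 := by rw [hWiso]; simpa using hh' _
  · rw [Submodule.mem_iInf]
    intro i
    rw [LinearMap.mem_ker]
    rw [ContinuousLinearMap.coe_coe]
    rcases i with ⟨k, hk⟩
    by_cases hk' : k + 1 < n
    · calc adjoint (V ⟨k, hk⟩) (adjoint W h)
          = (adjoint (V ⟨k, hk⟩) ∘L adjoint W) h := rfl
        _ = adjoint (V ⟨k + 1, hk'⟩) h := by rw [← hadj ⟨k, hk⟩ hk']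
        _ = 0 := hh' _
    · have hkn : k = n - 1 := by omega
      subst hkn
      have key := congrArg (fun T : H →L[ℂ] H => T h) hWVn'
      simp only [comp_apply] at key
      rw [show (⟨n - 1, hk⟩ : Fin n) = ⟨n - 1, by omega⟩ from rfl, key, hh', map_zero]
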